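/- Let α ∈ ℝ with cos α > 0, and consider the planar system ṙ = cos(ω − α), ω̇ = 2 r sin ω − (1/r) sin(ω − α) on r > 0 (with ω taken modulo 2π). Its fixed points are exactly (r0, ω0^+) and (r0, ω0^−), where r0 = 1/√(2 cos α) and ω0^± = α ± π/2, and the Jacobian of the system at (r0, ω0^±) equals J^± = [[0, ∓1], [±4 cos α, ∓ 2 sin α / √(2 cos α)]]. -/

import Mathlib

open Real Filter Set
open scoped Topology

private lemma deriv_aux (α r w : ℝ) (hr : r ≠ 0) :
    ∃ L : ℝ × ℝ →L[ℝ] ℝ × ℝ,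
      HasFDerivAt (fun p : ℝ × ℝ => (Real.cos (p.2 - α),
        2 * p.1 * Real.sin p.2 - (p.1)⁻¹ * Real.sin (p.2 - α))) L (r, w) ∧
      ∀ p : ℝ × ℝ, L p = (-Real.sin (w - α) * p.2,
        (2 * Real.sin w + (r ^ 2)⁻¹ * Real.sin (w - α)) * p.1
          + (2 * r * Real.cos w - r⁻¹ * Real.cos (w - α)) * p.2) := by
  have hsnd : HasFDerivAt (fun p : ℝ × ℝ => p.2) (ContinuousLinearMap.snd ℝ ℝ ℝ) (r, w) :=
    hasFDerivAt_snd
  have hfst : HasFDerivAt (fun p : ℝ × ℝ => p.1) (ContinuousLinearMap.fst ℝ ℝ ℝ) (r, w) :=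
    hasFDerivAt_fst
  have hsub : HasFDerivAt (fun p : ℝ × ℝ => p.2 - α) (ContinuousLinearMap.snd ℝ ℝ ℝ) (r, w) :=
    hsnd.sub_const α
  have h1 : HasFDerivAt (fun p : ℝ × ℝ => Real.cos (p.2 - α))
      ((-Real.sin (w - α)) • ContinuousLinearMap.snd ℝ ℝ ℝ) (r, w) :=
    (Real.hasDerivAt_cos (w - α)).comp_hasFDerivAt (h₂ := Real.cos) (r, w) hsub
  have h2a : HasFDerivAt (fun p : ℝ × ℝ => 2 * p.1)
      ((2 : ℝ) • ContinuousLinearMap.fst ℝ ℝ ℝ) (r, w) := by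
    simpa using hfst.const_mul (2 : ℝ)
  have h2b : HasFDerivAt (fun p : ℝ × ℝ => Real.sin p.2)
      ((Real.cos w) • ContinuousLinearMap.snd ℝ ℝ ℝ) (r, w) :=
    (Real.hasDerivAt_sin w).comp_hasFDerivAt (h₂ := Real.sin) (r, w) hsnd
  have h2 := h2a.mul h2b
  have h3a : HasFDerivAt (fun p : ℝ × ℝ => (p.1)⁻¹)
      ((-(r ^ 2)⁻¹) • ContinuousLinearMap.fst ℝ ℝ ℝ) (r, w) :=
    (hasDerivAt_inv hr).comp_hasFDerivAt (r, w) hfst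
  have h3b : HasFDerivAt (fun p : ℝ × ℝ => Real.sin (p.2 - α))
      ((Real.cos (w - α)) • ContinuousLinearMap.snd ℝ ℝ ℝ) (r, w) :=
    (Real.hasDerivAt_sin (w - α)).comp_hasFDerivAt (h₂ := Real.sin) (r, w) hsub
  have h3 := h3a.mul h3b
  have hF := h1.prodMk (h2.sub h3)
  refine ⟨_, hF, fun p => ?_⟩
  simp only [ContinuousLinearMap.prod_apply, ContinuousLinearMap.add_apply,
    ContinuousLinearMap.sub_apply, ContinuousLinearMap.smul_apply,
    ContinuousLinearMap.coe_fst', ContinuousLinearMap.coe_snd', smul_eq_mul,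
    Prod.mk.injEq]
  exact ⟨trivial, by ring⟩

theorem stmt16 (α : ℝ) (hα : 0 < Real.cos α)
    (f : ℝ × ℝ → ℝ × ℝ)
    (hf : f = fun p => (Real.cos (p.2 - α),
      2 * p.1 * Real.sin p.2 - (p.1)⁻¹ * Real.sin (p.2 - α)))
    (r0 : ℝ) (hr0 : r0 = 1 / Real.sqrt (2 * Real.cos α)) :
    -- the fixed points of the system on `{r > 0}` are exactly `(r0, α ± π/2)` mod `2π`
    (∀ r ω : ℝ, 0 < r →
      (f (r, ω) = (0, 0) ↔ (r = r0 ∧ ∃ k : ℤ,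
        ω = α + π / 2 + 2 * π * k ∨ ω = α - π / 2 + 2 * π * k))) ∧
    -- the Jacobian at `(r0, ω0^±)` is `J^±` (`σ = ±1` selects the sign)
    (∀ σ : ℝ, σ = 1 ∨ σ = -1 →
      ∃ L : ℝ × ℝ →L[ℝ] ℝ × ℝ,
        HasFDerivAt f L (r0, α + σ * (π / 2)) ∧
        ∀ p : ℝ × ℝ, L p = (-σ * p.2,
          σ * 4 * Real.cos α * p.1
            - σ * (2 * Real.sin α / Real.sqrt (2 * Real.cos α)) * p.2)) := by
  have h2c : (0 : ℝ) < 2 * Real.cos α := by linarith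
  have hs : 0 < Real.sqrt (2 * Real.cos α) := Real.sqrt_pos.2 h2c
  have hsq : Real.sqrt (2 * Real.cos α) ^ 2 = 2 * Real.cos α := Real.sq_sqrt h2c.le
  have hr0pos : 0 < r0 := by rw [hr0]; positivity
  have hr0sq : r0 ^ 2 = 1 / (2 * Real.cos α) := by
    rw [hr0, div_pow, one_pow, hsq]
  have hr0ne : r0 ≠ 0 := ne_of_gt hr0pos
  have key : ∀ r : ℝ, 0 < r → 2 * r * Real.cos α - r⁻¹ = 0 → r = r0 := by
    intro r hr h
    have hrne : r ≠ 0 := ne_of_gt hr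
    have h' : r ^ 2 = 1 / (2 * Real.cos α) := by
      field_simp at h ⊢
      nlinarith [h]
    have : r ^ 2 = r0 ^ 2 := by rw [h', hr0sq]
    nlinarith [this, hr, hr0pos]
  subst hf
  constructor
  · intro r ω hr
    have hrne : r ≠ 0 := ne_of_gt hr
    simp only [Prod.mk.injEq]
    constructor
    · rintro ⟨h1, h2⟩
      rw [Real.cos_eq_zero_iff] at h1
      obtain ⟨n, hn⟩ := h1
      have hω : ω = α + (2 * n + 1) * π / 2 := by linarith [hn]
      rcases Int.even_or_odd' n with ⟨m, rfl | rfl⟩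
      · -- ω = α + π/2 + 2πm
        have hω' : ω = α + π / 2 + 2 * π * m := by
          rw [hω]; push_cast; ring
        have hsin : Real.sin ω = Real.cos α := by
          rw [hω', show α + π / 2 + 2 * π * (m : ℝ) = (α + π / 2) + m * (2 * π) by ring,
            Real.sin_add_int_mul_two_pi, Real.sin_add_pi_div_two]
        have hsin2 : Real.sin (ω - α) = 1 := by
          rw [hω', show α + π / 2 + 2 * π * (m : ℝ) - α = π / 2 + m * (2 * π) by ring,
            Real.sin_add_int_mul_two_pi, Real.sin_pi_div_two]
        rw [hsin, hsin2, mul_one] at h2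
        exact ⟨key r hr (by linarith), m, Or.inl hω'⟩
      · -- n = 2m+1 : ω = α - π/2 + 2π(m+1)
        have hω' : ω = α - π / 2 + 2 * π * ((m : ℝ) + 1) := by
          rw [hω]; push_cast; ring
        have hω'' : ω = α - π / 2 + 2 * π * ((m + 1 : ℤ) : ℝ) := by
          rw [hω']; push_cast; ring
        have hsin : Real.sin ω = -Real.cos α := by
          rw [hω', show α - π / 2 + 2 * π * ((m : ℝ) + 1) = (α - π / 2) + (m + 1 : ℤ) * (2 * π) by
            push_cast; ring, Real.sin_add_int_mul_two_pi, Real.sin_sub_pi_div_two]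
        have hsin2 : Real.sin (ω - α) = -1 := by
          rw [hω', show α - π / 2 + 2 * π * ((m : ℝ) + 1) - α = -(π / 2) + (m + 1 : ℤ) * (2 * π) by
            push_cast; ring, Real.sin_add_int_mul_two_pi, Real.sin_neg, Real.sin_pi_div_two]
        rw [hsin, hsin2] at h2
        exact ⟨key r hr (by linarith), m + 1, Or.inr hω''⟩
    · rintro ⟨rfl, k, rfl | rfl⟩
      · have hc : Real.cos (α + π / 2 + 2 * π * (k : ℝ) - α) = 0 := by
          rw [show α + π / 2 + 2 * π * (k : ℝ) - α = π / 2 + k * (2 * π) by ring,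
            Real.cos_add_int_mul_two_pi, Real.cos_pi_div_two]
        have hs1 : Real.sin (α + π / 2 + 2 * π * (k : ℝ)) = Real.cos α := by
          rw [show α + π / 2 + 2 * π * (k : ℝ) = (α + π / 2) + k * (2 * π) by ring,
            Real.sin_add_int_mul_two_pi, Real.sin_add_pi_div_two]
        have hs2 : Real.sin (α + π / 2 + 2 * π * (k : ℝ) - α) = 1 := by
          rw [show α + π / 2 + 2 * π * (k : ℝ) - α = π / 2 + k * (2 * π) by ring,
            Real.sin_add_int_mul_two_pi, Real.sin_pi_div_two]
        refine ⟨hc, ?_⟩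
        rw [hs1, hs2, mul_one]
        have hinv : r⁻¹ = Real.sqrt (2 * Real.cos α) := by
          rw [hr0, one_div, inv_inv]
        have hmul := Real.mul_self_sqrt h2c.le
        have hsne : Real.sqrt (2 * Real.cos α) ≠ 0 := hs.ne'
        rw [hinv, hr0]
        generalize Real.sqrt (2 * Real.cos α) = t at hmul hsne ⊢
        field_simp
        nlinarith [hmul]
      · have hc : Real.cos (α - π / 2 + 2 * π * (k : ℝ) - α) = 0 := by
          rw [show α - π / 2 + 2 * π * (k : ℝ) - α = -(π / 2) + k * (2 * π) by ring,
            Real.cos_add_int_mul_two_pi, Real.cos_neg, Real.cos_pi_div_two]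
        have hs1 : Real.sin (α - π / 2 + 2 * π * (k : ℝ)) = -Real.cos α := by
          rw [show α - π / 2 + 2 * π * (k : ℝ) = (α - π / 2) + k * (2 * π) by ring,
            Real.sin_add_int_mul_two_pi, Real.sin_sub_pi_div_two]
        have hs2 : Real.sin (α - π / 2 + 2 * π * (k : ℝ) - α) = -1 := by
          rw [show α - π / 2 + 2 * π * (k : ℝ) - α = -(π / 2) + k * (2 * π) by ring,
            Real.sin_add_int_mul_two_pi, Real.sin_neg, Real.sin_pi_div_two]
        refine ⟨hc, ?_⟩
        rw [hs1, hs2]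
        have hinv : r⁻¹ = Real.sqrt (2 * Real.cos α) := by
          rw [hr0, one_div, inv_inv]
        have hmul := Real.mul_self_sqrt h2c.le
        have hsne : Real.sqrt (2 * Real.cos α) ≠ 0 := hs.ne'
        rw [hinv, hr0]
        generalize Real.sqrt (2 * Real.cos α) = t at hmul hsne ⊢
        field_simp
        nlinarith [hmul]
  · intro σ hσ
    set w := α + σ * (π / 2) with hw
    obtain ⟨L, hL, hLval⟩ := deriv_aux α r0 w hr0ne
    refine ⟨L, hL, fun p => ?_⟩
    have hinv : r0⁻¹ = Real.sqrt (2 * Real.cos α) := by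
      rw [hr0]; field_simp
    have hinv2 : (r0 ^ 2)⁻¹ = 2 * Real.cos α := by
      rw [hr0sq]; field_simp
    rcases hσ with rfl | rfl
    · have hwα : w - α = π / 2 := by rw [hw]; ring
      have hww : w = α + π / 2 := by rw [hw]; ring
      rw [hLval p, hwα, hww, Real.sin_pi_div_two, Real.cos_pi_div_two,
        Real.sin_add_pi_div_two, Real.cos_add_pi_div_two, hinv2, hr0]
      simp only [Prod.mk.injEq]
      constructor
      · trivial
      · field_simp
        ring
    · have hwα : w - α = -(π / 2) := by rw [hw]; ring
      have hww : w = α - π / 2 := by rw [hw]; ring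
      rw [hLval p, hwα, Real.sin_neg, Real.cos_neg, hww, Real.sin_pi_div_two,
        Real.cos_pi_div_two, Real.sin_sub_pi_div_two, Real.cos_sub_pi_div_two, hinv2, hr0]
      simp only [Prod.mk.injEq]
      constructor
      · trivial
      · field_simp
        ring
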